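/- Let Γ be a homogeneous structure over a relational signature τ with domain D, and let ≺ be a linear order on D such that Γ′ = (Γ, ≺) is homogeneous, has oligomorphic automorphism group, and has age with the Ramsey property. Suppose furthermore that every acyclic orbital of Aut(Γ) is also an orbital of Aut(Γ′). Then the age of Γ′ has the ordering property with respect to ≺. -/

import Mathlib

open FirstOrder FirstOrder.Language CategoryTheory

universe u v w

/-- `Γ` is homogeneous. -/
def IsHomogeneous (L : FirstOrder.Language.{u, v}) (Γ : Type w) [L.Structure Γ] : Prop :=
  ∀ A : Bundled.{w} L.Structure, Finite A → ∀ f g : A ↪[L] Γ,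
    ∃ α : Γ ≃[L] Γ, ∀ a : A, α (f a) = g a

/-- `(X, ltX)` belongs to the age of the ordered expansion `(Γ, lt)`. -/
def InOrdAge (L : FirstOrder.Language.{u, v}) (Γ : Type w) [L.Structure Γ]
    (lt : Γ → Γ → Prop) (X : Bundled.{w} L.Structure) (ltX : X → X → Prop) : Prop :=
  Finite X ∧ ∃ f : X ↪[L] Γ, ∀ x y : X, lt (f x) (f y) ↔ ltX x y

/-- The ordering property with respect to `lt` for the age of `(Γ, lt)`. -/
def OrderingProperty (L : FirstOrder.Language.{u, v}) (Γ : Type w) [L.Structure Γ]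
    (lt : Γ → Γ → Prop) : Prop :=
  ∀ X : Bundled.{w} L.Structure, (∃ ltX : X → X → Prop, InOrdAge L Γ lt X ltX) →
    ∃ Y : Bundled.{w} L.Structure, (∃ ltY : Y → Y → Prop, InOrdAge L Γ lt Y ltY) ∧
      ∀ (ltX : X → X → Prop) (ltY : Y → Y → Prop),
        InOrdAge L Γ lt X ltX → InOrdAge L Γ lt Y ltY →
          ∃ f : X ↪[L] Y, ∀ x y : X, ltY (f x) (f y) ↔ ltX x y

/-- The ordered expansion `(Γ, lt)` is homogeneous. -/
def IsOrdHomogeneous (L : FirstOrder.Language.{u, v}) (Γ : Type w) [L.Structure Γ]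
    (lt : Γ → Γ → Prop) : Prop :=
  ∀ (A : Bundled.{w} L.Structure) (ltA : A → A → Prop), Finite A →
    ∀ f g : A ↪[L] Γ, (∀ x y : A, lt (f x) (f y) ↔ ltA x y) →
      (∀ x y : A, lt (g x) (g y) ↔ ltA x y) →
      ∃ α : Γ ≃[L] Γ, (∀ x y : Γ, lt (α x) (α y) ↔ lt x y) ∧ ∀ a : A, α (f a) = g a

/-- The automorphism group of the ordered expansion `(Γ, lt)` is oligomorphic. -/
def OrdOligomorphic (L : FirstOrder.Language.{u, v}) (Γ : Type w) [L.Structure Γ]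
    (lt : Γ → Γ → Prop) : Prop :=
  ∀ n : ℕ, Set.Finite {O : Set (Fin n → Γ) | ∃ t : Fin n → Γ,
    O = {u | ∃ g : Γ ≃[L] Γ, (∀ x y : Γ, lt (g x) (g y) ↔ lt x y) ∧ u = ⇑g ∘ t}}

/-- Composition of order-preserving embeddings. -/
def ordComp {L : FirstOrder.Language.{u, v}} {A B C : Bundled.{w} L.Structure}
    {ltA : A → A → Prop} {ltB : B → B → Prop} {ltC : C → C → Prop}
    (f : {f : B ↪[L] C // ∀ x y : B, ltC (f x) (f y) ↔ ltB x y})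
    (e : {e : A ↪[L] B // ∀ x y : A, ltB (e x) (e y) ↔ ltA x y}) :
    {g : A ↪[L] C // ∀ x y : A, ltC (g x) (g y) ↔ ltA x y} :=
  ⟨f.1.comp e.1, fun x y => by
    rw [Embedding.comp_apply, Embedding.comp_apply, f.2, e.2]⟩

/-- The age of `(Γ, lt)` has the Ramsey property (with ordered embeddings). -/
def OrdRamseyAge (L : FirstOrder.Language.{u, v}) (Γ : Type w) [L.Structure Γ]
    (lt : Γ → Γ → Prop) : Prop :=
  ∀ (A B : Bundled.{w} L.Structure) (ltA : A → A → Prop) (ltB : B → B → Prop),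
    InOrdAge L Γ lt A ltA → InOrdAge L Γ lt B ltB → ∀ r : ℕ,
      ∃ (C : Bundled.{w} L.Structure) (ltC : C → C → Prop),
        InOrdAge L Γ lt C ltC ∧
          ∀ χ : {e : A ↪[L] C // ∀ x y : A, ltC (e x) (e y) ↔ ltA x y} → Fin r,
            ∃ f : {f : B ↪[L] C // ∀ x y : B, ltC (f x) (f y) ↔ ltB x y},
              ∀ e₁ e₂ : {e : A ↪[L] B // ∀ x y : A, ltB (e x) (e y) ↔ ltA x y},
                χ (ordComp f e₁) = χ (ordComp f e₂)

/-- An orbital of `Aut(Γ)`: an orbit of the componentwise action on pairs. -/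
def IsOrbital (L : FirstOrder.Language.{u, v}) (Γ : Type w) [L.Structure Γ]
    (O : Set (Γ × Γ)) : Prop :=
  ∃ p : Γ × Γ, O = {q | ∃ g : Γ ≃[L] Γ, q = (g p.1, g p.2)}

/-- An orbital of `Aut(Γ, lt)`. -/
def IsOrdOrbital (L : FirstOrder.Language.{u, v}) (Γ : Type w) [L.Structure Γ]
    (lt : Γ → Γ → Prop) (O : Set (Γ × Γ)) : Prop :=
  ∃ p : Γ × Γ, O = {q | ∃ g : Γ ≃[L] Γ,
    (∀ x y : Γ, lt (g x) (g y) ↔ lt x y) ∧ q = (g p.1, g p.2)}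

/-- `O` contains an `O`-cycle `(u₀,u₁), (u₁,u₂), …, (uₙ,u₀)`. -/
def HasOCycle {Γ : Type w} (O : Set (Γ × Γ)) : Prop :=
  ∃ (n : ℕ) (u : Fin (n + 1) → Γ), ∀ i : Fin (n + 1), (u i, u (i + 1)) ∈ O

namespace Stmt17Aux

variable (L : FirstOrder.Language.{u,v}) (Γ : Type w) [L.Structure Γ]

/-- Induced structure on a subset (relational language). -/
def sStr [L.IsRelational] (s : Set Γ) : L.Structure s where
  funMap := fun {_} f _ => isEmptyElim f
  RelMap := fun {_} r v => Structure.RelMap r (fun i => (v i : Γ))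

def sB [L.IsRelational] (s : Set Γ) : Bundled.{w} L.Structure := ⟨s, sStr L Γ s⟩

def sIncl [L.IsRelational] (s : Set Γ) : sB L Γ s ↪[L] Γ where
  toFun := Subtype.val
  inj' := Subtype.val_injective
  map_fun' := fun {_} f _ => isEmptyElim f
  map_rel' := fun {_} _ _ => Iff.rfl

def codR [L.IsRelational] {X : Bundled.{w} L.Structure} (s : Set Γ) (f : X ↪[L] Γ)
    (hs : ∀ x, f x ∈ s) : X ↪[L] sB L Γ s where
  toFun := fun x => ⟨f x, hs x⟩
  inj' := fun a b h => f.injective (congrArg Subtype.val h)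
  map_fun' := fun {_} F _ => isEmptyElim F
  map_rel' := fun {_} r x => f.map_rel r x

@[simp] lemma codR_val [L.IsRelational] {X : Bundled.{w} L.Structure} (s : Set Γ)
    (f : X ↪[L] Γ) (hs : ∀ x, f x ∈ s) (x : X) : ((codR L Γ s f hs) x).1 = f x := rfl

def SameOrb (p q : Γ × Γ) : Prop := ∃ g : Γ ≃[L] Γ, q = (g p.1, g p.2)

def Orb (p : Γ × Γ) : Set (Γ × Γ) := {q | SameOrb L Γ p q}

variable {L Γ}

lemma sameOrb_refl (p : Γ × Γ) : SameOrb L Γ p p :=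
  ⟨Language.Equiv.refl L Γ, by simp [Prod.ext_iff]⟩

lemma sameOrb_symm {p q : Γ × Γ} (h : SameOrb L Γ p q) : SameOrb L Γ q p := by
  obtain ⟨g, rfl⟩ := h
  exact ⟨g.symm, by simp [Prod.ext_iff]⟩

lemma sameOrb_trans {p q r : Γ × Γ} (h1 : SameOrb L Γ p q) (h2 : SameOrb L Γ q r) :
    SameOrb L Γ p r := by
  obtain ⟨g, rfl⟩ := h1
  obtain ⟨g', rfl⟩ := h2
  exact ⟨g'.comp g, by simp [Prod.ext_iff]⟩

lemma sameOrb_swap {p q : Γ × Γ} (h : SameOrb L Γ p q) :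
    SameOrb L Γ (p.2, p.1) (q.2, q.1) := by
  obtain ⟨g, rfl⟩ := h
  exact ⟨g, rfl⟩

lemma orb_eq {p q : Γ × Γ} (h : SameOrb L Γ p q) : Orb L Γ p = Orb L Γ q := by
  ext r
  exact ⟨fun hr => sameOrb_trans (sameOrb_symm h) hr, fun hr => sameOrb_trans h hr⟩

variable (L Γ) [L.IsRelational]

def pB (p : Γ × Γ) : Bundled.{w} L.Structure := sB L Γ ({p.1, p.2} : Set Γ)

def z1 (p : Γ × Γ) : pB L Γ p := ⟨p.1, Set.mem_insert _ _⟩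
def z2 (p : Γ × Γ) : pB L Γ p := ⟨p.2, Set.mem_insert_of_mem _ rfl⟩

def mapPair (s : Set Γ) (p : Γ × Γ) (g : Γ ≃[L] Γ) (h1 : g p.1 ∈ s) (h2 : g p.2 ∈ s) :
    pB L Γ p ↪[L] sB L Γ s where
  toFun z := ⟨g z.1, by
    rcases Set.mem_insert_iff.mp z.2 with h | h
    · rw [h]; exact h1
    · rw [Set.mem_singleton_iff.mp h]; exact h2⟩
  inj' := fun z w h => Subtype.ext (g.injective (congrArg Subtype.val h))
  map_fun' := fun {_} F _ => isEmptyElim F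
  map_rel' := fun {_} r v => g.map_rel r fun i => (v i).1

@[simp] lemma mapPair_val (s : Set Γ) (p : Γ × Γ) (g : Γ ≃[L] Γ) (h1 h2) (z : pB L Γ p) :
    ((mapPair L Γ s p g h1 h2) z).1 = g z.1 := rfl

variable {L Γ}
variable {lt : Γ → Γ → Prop}

lemma mapPair_ord (hlt : IsStrictTotalOrder Γ lt) {s : Set Γ} {p : Γ × Γ} {g : Γ ≃[L] Γ}
    {h1 : g p.1 ∈ s} {h2 : g p.2 ∈ s} (hp : lt p.1 p.2) (hg : lt (g p.1) (g p.2)) :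
    ∀ z w : pB L Γ p, lt (mapPair L Γ s p g h1 h2 z).1 (mapPair L Γ s p g h1 h2 w).1
      ↔ lt z.1 w.1 := by
  have irr := hlt.toIsStrictOrder.toIrrefl.irrefl
  have tr := fun {a b c} (h : lt a b) (h' : lt b c) => hlt.toIsStrictOrder.toIsTrans.trans a b c h h'
  have asym : ∀ {a b}, lt a b → ¬ lt b a := fun {a b} h h' => irr a (tr h h')
  intro z w
  have hz := Set.mem_insert_iff.mp z.2
  have hw := Set.mem_insert_iff.mp w.2
  rw [Set.mem_singleton_iff] at hz hw
  show lt (g z.1) (g w.1) ↔ lt z.1 w.1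
  rcases hz with hz | hz <;> rcases hw with hw | hw <;> rw [hz, hw]
  · exact iff_of_false (irr _) (irr _)
  · exact iff_of_true hg hp
  · exact iff_of_false (asym hg) (asym hp)
  · exact iff_of_false (irr _) (irr _)

open Fin.NatCast in
lemma cycle_absurd (hlt : IsStrictTotalOrder Γ lt) {m : ℕ} (v : Fin (m+1) → Γ)
    (h : ∀ i : Fin (m+1), lt (v (i+1)) (v i)) : False := by
  have irr := hlt.toIsStrictOrder.toIrrefl.irrefl
  have tr := fun {a b c} (hab : lt a b) (hbc : lt b c) => hlt.toIsStrictOrder.toIsTrans.trans a b c hab hbc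
  have h' : ∀ j : ℕ, lt (v ((j:ℕ) + 1 : ℕ)) (v (j:ℕ)) := by
    intro j
    have := h ((j : ℕ) : Fin (m+1))
    simpa [Nat.cast_add] using this
  have desc : ∀ j : ℕ, lt (v ((j + 1 : ℕ))) (v ((0:ℕ))) := by
    intro j
    induction j with
    | zero => exact h' 0
    | succ n ih => exact tr (h' (n+1)) ih
  have := desc m
  rw [Fin.natCast_self] at this
  simp only [Nat.cast_zero] at this
  exact irr _ this

section
variable {L : FirstOrder.Language.{u,v}} {Γ : Type w} [L.Structure Γ] {lt : Γ → Γ → Prop}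

lemma typeInv (hΓ : IsHomogeneous L Γ) (X : Bundled.{w} L.Structure) (hfin : Finite X)
    (k₁ k₂ : X ↪[L] Γ) (x y : X) : SameOrb L Γ (k₁ x, k₁ y) (k₂ x, k₂ y) := by
  obtain ⟨α, hα⟩ := hΓ X hfin k₁ k₂
  exact ⟨α, by rw [hα, hα]⟩

variable [L.IsRelational]

lemma sB_age (s : Set Γ) (hs : s.Finite) :
    InOrdAge L Γ lt (sB L Γ s) (fun a b => lt a.1 b.1) :=
  ⟨hs.to_subtype, sIncl L Γ s, fun _ _ => Iff.rfl⟩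

lemma ifFin2 {P Q : Prop} [Decidable P] [Decidable Q]
    (h : (if P then (0 : Fin 2) else 1) = (if Q then 0 else 1)) : P ↔ Q := by
  by_cases hP : P <;> by_cases hQ : Q <;> simp [hP, hQ] at h ⊢

lemma chain (hram : OrdRamseyAge L Γ lt) (l : List (Γ × Γ)) :
    ∀ (B : Bundled.{w} L.Structure) (ltB : B → B → Prop), InOrdAge L Γ lt B ltB →
      ∃ (Y : Bundled.{w} L.Structure) (ltY : Y → Y → Prop), InOrdAge L Γ lt Y ltY ∧
        ∀ c : Y → Y → Prop,
          ∃ β : {β : B ↪[L] Y // ∀ x y, ltY (β x) (β y) ↔ ltB x y},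
            ∀ p ∈ l, ∀ e₁ e₂ : {e : pB L Γ p ↪[L] B //
                ∀ x y : pB L Γ p, ltB (e x) (e y) ↔ lt x.1 y.1},
              (c (β.1 (e₁.1 (z1 L Γ p))) (β.1 (e₁.1 (z2 L Γ p))) ↔
               c (β.1 (e₂.1 (z1 L Γ p))) (β.1 (e₂.1 (z2 L Γ p)))) := by
  classical
  induction l with
  | nil =>
    intro B ltB hB
    refine ⟨B, ltB, hB, fun c => ⟨⟨Embedding.refl L B, fun x y => by simp⟩, ?_⟩⟩
    intro p hp
    exact absurd hp List.not_mem_nil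
  | cons p l ih =>
    intro B ltB hB
    obtain ⟨Y₁, ltY₁, hY₁, prop₁⟩ := ih B ltB hB
    obtain ⟨Y, ltY, hY, hRam⟩ := hram (pB L Γ p) Y₁ (fun a b => lt a.1 b.1) ltY₁
      (sB_age _ ((Set.finite_singleton p.2).insert p.1)) hY₁ 2
    refine ⟨Y, ltY, hY, fun c => ?_⟩
    obtain ⟨f, hf⟩ := hRam (fun e => if c (e.1 (z1 L Γ p)) (e.1 (z2 L Γ p)) then 0 else 1)
    obtain ⟨β₁, hβ₁⟩ := prop₁ (fun u v => c (f.1 u) (f.1 v))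
    refine ⟨ordComp f β₁, ?_⟩
    intro p' hp'
    rcases List.mem_cons.mp hp' with rfl | hmem
    · intro e₁ e₂
      have h := hf (ordComp β₁ e₁) (ordComp β₁ e₂)
      have h2 := ifFin2 h
      simpa [ordComp, Embedding.comp_apply] using h2
    · intro e₁ e₂
      have h := hβ₁ p' hmem e₁ e₂
      simpa [ordComp, Embedding.comp_apply] using h

lemma constPairs {Y : Bundled.{w} L.Structure} (hlt : IsStrictTotalOrder Γ lt) (s : Set Γ)
    (c : Y → Y → Prop) (βf : sB L Γ s → Y) (l : List (Γ × Γ))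
    (hcon : ∀ p ∈ l, ∀ e₁ e₂ : {e : pB L Γ p ↪[L] sB L Γ s //
        ∀ x y : pB L Γ p, lt ((e x).1) ((e y).1) ↔ lt x.1 y.1},
      (c (βf (e₁.1 (z1 L Γ p))) (βf (e₁.1 (z2 L Γ p))) ↔
       c (βf (e₂.1 (z1 L Γ p))) (βf (e₂.1 (z2 L Γ p)))))
    (a b a' b' : sB L Γ s) (hab : lt a.1 b.1) (hab' : lt a'.1 b'.1)
    (hmem : ((a.1 : Γ), (b.1 : Γ)) ∈ l)
    (horb : SameOrb L Γ (a.1, b.1) (a'.1, b'.1)) :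
    (c (βf a) (βf b) ↔ c (βf a') (βf b')) := by
  obtain ⟨g, hg⟩ := horb
  have hga : g a.1 = a'.1 := (congrArg Prod.fst hg).symm
  have hgb : g b.1 = b'.1 := (congrArg Prod.snd hg).symm
  have h1' : (Language.Equiv.refl L Γ) (a.1 : Γ) ∈ s := by simpa using a.2
  have h2' : (Language.Equiv.refl L Γ) (b.1 : Γ) ∈ s := by simpa using b.2
  have h1g : g (a.1 : Γ) ∈ s := by rw [hga]; exact a'.2
  have h2g : g (b.1 : Γ) ∈ s := by rw [hgb]; exact b'.2
  have ordrefl : lt ((Language.Equiv.refl L Γ) (a.1 : Γ)) ((Language.Equiv.refl L Γ) (b.1 : Γ)) := by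
    simpa using hab
  have ordg : lt (g (a.1 : Γ)) (g (b.1 : Γ)) := by rw [hga, hgb]; exact hab'
  have key := hcon (a.1, b.1) hmem
    ⟨mapPair L Γ s (a.1, b.1) (Language.Equiv.refl L Γ) h1' h2', mapPair_ord hlt hab ordrefl⟩
    ⟨mapPair L Γ s (a.1, b.1) g h1g h2g, mapPair_ord hlt hab ordg⟩
  have e1a : (mapPair L Γ s (a.1, b.1) (Language.Equiv.refl L Γ) h1' h2') (z1 L Γ (a.1, b.1)) = a := by
    apply Subtype.ext; rfl
  have e1b : (mapPair L Γ s (a.1, b.1) (Language.Equiv.refl L Γ) h1' h2') (z2 L Γ (a.1, b.1)) = b := by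
    apply Subtype.ext; rfl
  have e2a : (mapPair L Γ s (a.1, b.1) g h1g h2g) (z1 L Γ (a.1, b.1)) = a' := by
    apply Subtype.ext; exact hga
  have e2b : (mapPair L Γ s (a.1, b.1) g h1g h2g) (z2 L Γ (a.1, b.1)) = b' := by
    apply Subtype.ext; exact hgb
  rw [e1a, e1b, e2a, e2b] at key
  exact key
end

lemma keyLemma (hlt : IsStrictTotalOrder Γ lt) (hΓ : IsHomogeneous L Γ)
    (horb : ∀ O : Set (Γ × Γ), IsOrbital L Γ O → ¬ HasOCycle O → IsOrdOrbital L Γ lt O)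
    (X : Bundled.{w} L.Structure) (hXfin : Finite X)
    (F : {σ : X → X → Prop // InOrdAge L Γ lt X σ} → (X ↪[L] Γ))
    (hF : ∀ σ x y, lt (F σ x) (F σ y) ↔ σ.1 x y)
    (σ₀ : {σ : X → X → Prop // InOrdAge L Γ lt X σ})
    (M : X → X → ℕ) (U : ∀ x y : X, Fin (M x y + 1) → Γ)
    (hU : ∀ x y, HasOCycle (Orb L Γ (F σ₀ x, F σ₀ y)) →
      ∀ i, (U x y i, U x y (i+1)) ∈ Orb L Γ (F σ₀ x, F σ₀ y))
    (wSet : Set Γ)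
    (hmemF : ∀ σ x, F σ x ∈ wSet)
    (hmemU : ∀ x y i, U x y i ∈ wSet)
    (l : List (Γ × Γ))
    (hlmem : ∀ p : Γ × Γ, p.1 ∈ wSet → p.2 ∈ wSet → lt p.1 p.2 → p ∈ l)
    (Y : Bundled.{w} L.Structure)
    (ltX : X → X → Prop) (ltY' : Y → Y → Prop)
    (hltX : InOrdAge L Γ lt X ltX) (hltY' : InOrdAge L Γ lt Y ltY')
    (β : sB L Γ wSet ↪[L] Y)
    (hβcon : ∀ p ∈ l, ∀ e₁ e₂ : {e : pB L Γ p ↪[L] sB L Γ wSet //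
        ∀ x y : pB L Γ p, lt ((e x).1) ((e y).1) ↔ lt x.1 y.1},
      (ltY' (β (e₁.1 (z1 L Γ p))) (β (e₁.1 (z2 L Γ p))) ↔
       ltY' (β (e₂.1 (z1 L Γ p))) (β (e₂.1 (z2 L Γ p))))) :
    ∃ f : X ↪[L] Y, ∀ x y : X, ltY' (f x) (f y) ↔ ltX x y := by
  classical
  obtain ⟨h', hh'⟩ := hltY'.2
  have irr := hlt.toIsStrictOrder.toIrrefl.irrefl
  have tr := fun {a b c : Γ} (h : lt a b) (h2 : lt b c) =>
    hlt.toIsStrictOrder.toIsTrans.trans a b c h h2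
  have tri : ∀ a b : Γ, lt a b ∨ a = b ∨ lt b a := by haveI := hlt; exact trichotomous
  have asym : ∀ {a b : Γ}, lt a b → ¬ lt b a := fun h h2 => irr _ (tr h h2)
  set σS : {σ : X → X → Prop // InOrdAge L Γ lt X σ} := ⟨ltX, hltX⟩ with hσS
  set S : X ↪[L] sB L Γ wSet := codR L Γ wSet (F σS) (hmemF σS) with hSdef
  have hS : ∀ x y, lt (S x).1 (S y).1 ↔ ltX x y := fun x y => hF σS x y
  have h₂ : InOrdAge L Γ lt X (fun x y => ltY' (β (S x)) (β (S y))) := by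
    refine ⟨hXfin, h'.comp (β.comp S), fun x y => ?_⟩
    simp only [Embedding.comp_apply]
    exact hh' _ _
  set σT : {σ : X → X → Prop // InOrdAge L Γ lt X σ} :=
    ⟨fun x y => ltY' (β (S x)) (β (S y)), h₂⟩ with hσT
  set T : X ↪[L] sB L Γ wSet := codR L Γ wSet (F σT) (hmemF σT) with hTdef
  have hT : ∀ x y, lt (T x).1 (T y).1 ↔ ltY' (β (S x)) (β (S y)) := fun x y => hF σT x y
  have CONST : ∀ a b a' b' : sB L Γ wSet, lt a.1 b.1 → lt a'.1 b'.1 →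
      SameOrb L Γ (a.1, b.1) (a'.1, b'.1) →
      (ltY' (β a) (β b) ↔ ltY' (β a') (β b')) := fun a b a' b' hab hab' ho =>
    constPairs hlt wSet ltY' β l hβcon a b a' b' hab hab' (hlmem _ a.2 b.2 hab) ho
  have irrY : ∀ u : Y, ¬ ltY' u u := fun u h => irr _ ((hh' u u).mpr h)
  have asymY : ∀ {u v : Y}, ltY' u v → ¬ ltY' v u := fun h h2 =>
    irr _ (tr ((hh' _ _).mpr h) ((hh' _ _).mpr h2))
  have triY : ∀ u v : Y, u ≠ v → ltY' u v ∨ ltY' v u := by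
    intro u v huv
    rcases tri (h' u) (h' v) with h | h | h
    · exact Or.inl ((hh' _ _).mp h)
    · exact absurd (h'.injective h) huv
    · exact Or.inr ((hh' _ _).mp h)
  have key : ∀ x y : X, ltX x y → ltY' (β (T x)) (β (T y)) := by
    intro x y hxy
    have hxyne : x ≠ y := by rintro rfl; exact irr _ ((hS x x).mpr hxy)
    have hSf : lt (S x).1 (S y).1 := (hS x y).mpr hxy
    by_cases h2 : ltY' (β (S x)) (β (S y))
    · have hTf : lt (T x).1 (T y).1 := (hT x y).mpr h2
      have so : SameOrb L Γ ((S x).1, (S y).1) ((T x).1, (T y).1) :=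
        typeInv hΓ X hXfin (F σS) (F σT) x y
      exact (CONST _ _ _ _ hSf hTf so).mp h2
    · have h2' : ltY' (β (S y)) (β (S x)) := by
        rcases triY (β (S x)) (β (S y))
          (fun hEq => hxyne (S.injective (β.injective hEq))) with h | h
        · exact absurd h h2
        · exact h
      have hTb : lt (T y).1 (T x).1 := (hT y x).mpr h2'
      by_cases hcyc : HasOCycle (Orb L Γ (F σS x, F σS y))
      · have hOeq : Orb L Γ (F σ₀ x, F σ₀ y) = Orb L Γ (F σS x, F σS y) :=
          orb_eq (typeInv hΓ X hXfin (F σ₀) (F σS) x y)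
        have hcyc₀ : HasOCycle (Orb L Γ (F σ₀ x, F σ₀ y)) := by rwa [hOeq]
        have hu := hU x y hcyc₀
        have hu' : ∀ i, SameOrb L Γ (F σS x, F σS y) (U x y i, U x y (i+1)) := by
          intro i; have h3 := hu i; rw [hOeq] at h3; exact h3
        have hune : ∀ i : Fin (M x y + 1), U x y i ≠ U x y (i+1) := by
          intro i hEq
          obtain ⟨g, hg⟩ := hu' i
          have e1 : U x y i = g (F σS x) := congrArg Prod.fst hg
          have e2 : U x y (i+1) = g (F σS y) := congrArg Prod.snd hg
          exact hxyne ((F σS).injective (g.injective (by rw [← e1, ← e2, hEq])))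
        have hex : ∃ i : Fin (M x y + 1),
            lt (h' (β ⟨U x y i, hmemU x y i⟩)) (h' (β ⟨U x y (i+1), hmemU x y (i+1)⟩)) := by
          by_contra hno
          push_neg at hno
          refine cycle_absurd hlt (fun i : Fin (M x y + 1) => h' (β ⟨U x y i, hmemU x y i⟩)) ?_
          intro i
          rcases tri (h' (β ⟨U x y (i+1), hmemU x y (i+1)⟩))
            (h' (β ⟨U x y i, hmemU x y i⟩)) with h | h | h
          · exact h
          · exact absurd (congrArg Subtype.val (β.injective (h'.injective h))).symm (hune i)
          · exact absurd h (hno i)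
        obtain ⟨i₀, hi₀⟩ := hex
        have hEY : ltY' (β ⟨U x y i₀, hmemU x y i₀⟩) (β ⟨U x y (i₀+1), hmemU x y (i₀+1)⟩) :=
          (hh' _ _).mp hi₀
        by_cases hfw : lt (U x y i₀) (U x y (i₀+1))
        · have hiff := CONST (S x) (S y) ⟨U x y i₀, hmemU x y i₀⟩
            ⟨U x y (i₀+1), hmemU x y (i₀+1)⟩ hSf hfw (hu' i₀)
          exact absurd (hiff.mpr hEY) h2
        · have hbw : lt (U x y (i₀+1)) (U x y i₀) := by
            rcases tri (U x y (i₀+1)) (U x y i₀) with h | h | h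
            · exact h
            · exact absurd h.symm (hune i₀)
            · exact absurd h hfw
          have so2 : SameOrb L Γ (U x y (i₀+1), U x y i₀) ((T y).1, (T x).1) := by
            have s1' := sameOrb_swap (hu' i₀)
            have s2 : SameOrb L Γ (F σS y, F σS x) ((T y).1, (T x).1) :=
              typeInv hΓ X hXfin (F σS) (F σT) y x
            exact sameOrb_trans (sameOrb_symm s1') s2
          have hiff := CONST ⟨U x y (i₀+1), hmemU x y (i₀+1)⟩ ⟨U x y i₀, hmemU x y i₀⟩
            (T y) (T x) hbw hTb so2
          have hno2 : ¬ ltY' (β (T y)) (β (T x)) := fun hcon => asymY hEY (hiff.mpr hcon)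
          rcases triY (β (T x)) (β (T y))
            (fun hEq => hxyne (T.injective (β.injective hEq))) with h | h
          · exact h
          · exact absurd h hno2
      · have hOrb : IsOrbital L Γ (Orb L Γ (F σS x, F σS y)) := ⟨(F σS x, F σS y), rfl⟩
        obtain ⟨p', hset⟩ := horb _ hOrb hcyc
        have mem₁ : (F σS x, F σS y) ∈ Orb L Γ (F σS x, F σS y) := sameOrb_refl _
        rw [hset] at mem₁
        obtain ⟨g₁, hg₁ord, hg₁⟩ := mem₁
        have hp' : lt p'.1 p'.2 := by
          have e1 : F σS x = g₁ p'.1 := congrArg Prod.fst hg₁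
          have e2 : F σS y = g₁ p'.2 := congrArg Prod.snd hg₁
          have h3 : lt (g₁ p'.1) (g₁ p'.2) := by rw [← e1, ← e2]; exact hSf
          exact (hg₁ord _ _).mp h3
        have mem₂ : (h' (β (S x)), h' (β (S y))) ∈ Orb L Γ (F σS x, F σS y) := by
          have h3 := typeInv hΓ X hXfin (F σS) (h'.comp (β.comp S)) x y
          exact h3
        rw [hset] at mem₂
        obtain ⟨g₂, hg₂ord, hg₂⟩ := mem₂
        have h3 : lt (h' (β (S x))) (h' (β (S y))) := by
          have e1 : h' (β (S x)) = g₂ p'.1 := congrArg Prod.fst hg₂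
          have e2 : h' (β (S y)) = g₂ p'.2 := congrArg Prod.snd hg₂
          rw [e1, e2]
          exact (hg₂ord _ _).mpr hp'
        exact absurd ((hh' _ _).mp h3) h2
  have triX : ∀ a b : X, a ≠ b → ltX a b ∨ ltX b a := by
    intro a b hne
    rcases tri (S a).1 (S b).1 with h | h | h
    · exact Or.inl ((hS a b).mp h)
    · exact absurd (S.injective (Subtype.ext h)) hne
    · exact Or.inr ((hS b a).mp h)
  refine ⟨β.comp T, fun x y => ?_⟩
  simp only [Embedding.comp_apply]
  constructor
  · intro h
    by_cases hxy : x = y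
    · subst hxy; exact absurd h (irrY _)
    · rcases triX x y hxy with h4 | h4
      · exact h4
      · exact absurd h (asymY (key y x h4))
  · exact key x y

end Stmt17Aux

/-- If `Γ` is homogeneous, `(Γ, lt)` is a homogeneous ω-categorical Ramsey order expansion,
and every acyclic orbital of `Aut(Γ)` is an orbital of `Aut(Γ, lt)`, then the age of `(Γ, lt)`
has the ordering property with respect to `lt`. -/
theorem stmt17 (L : FirstOrder.Language.{u, v}) [L.IsRelational]
    (Γ : Type w) [L.Structure Γ]
    (lt : Γ → Γ → Prop) (hlt : IsStrictTotalOrder Γ lt)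
    (hΓ : IsHomogeneous L Γ) (hΓ' : IsOrdHomogeneous L Γ lt)
    (holig : OrdOligomorphic L Γ lt) (hram : OrdRamseyAge L Γ lt)
    (horb : ∀ O : Set (Γ × Γ), IsOrbital L Γ O → ¬ HasOCycle O → IsOrdOrbital L Γ lt O) :
    OrderingProperty L Γ lt := by
  classical
  intro X hX
  obtain ⟨ltX₀, hX₀⟩ := hX
  haveI hXfin : Finite X := hX₀.1
  have hFex : ∀ σ : {σ : X → X → Prop // InOrdAge L Γ lt X σ},
      ∃ f : X ↪[L] Γ, ∀ x y, lt (f x) (f y) ↔ σ.1 x y := fun σ => σ.2.2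
  choose F hF using hFex
  set σ₀ : {σ : X → X → Prop // InOrdAge L Γ lt X σ} := ⟨ltX₀, hX₀⟩ with hσ₀
  have cycex : ∀ x y : X, ∃ (m : ℕ) (u : Fin (m+1) → Γ),
      HasOCycle (Stmt17Aux.Orb L Γ (F σ₀ x, F σ₀ y)) →
        ∀ i, (u i, u (i+1)) ∈ Stmt17Aux.Orb L Γ (F σ₀ x, F σ₀ y) := by
    intro x y
    by_cases h : HasOCycle (Stmt17Aux.Orb L Γ (F σ₀ x, F σ₀ y))
    · obtain ⟨m, u, hu⟩ := h
      exact ⟨m, u, fun _ => hu⟩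
    · exact ⟨0, fun _ => F σ₀ x, fun hc => absurd hc h⟩
  choose M U hU using cycex
  set wSet : Set Γ := (⋃ σ, Set.range (F σ)) ∪ (⋃ x, ⋃ y, Set.range (U x y)) with hwSet
  have hmemF : ∀ σ x, F σ x ∈ wSet := fun σ x =>
    Set.mem_union_left _ (Set.mem_iUnion.mpr ⟨σ, Set.mem_range_self x⟩)
  have hmemU : ∀ x y i, U x y i ∈ wSet := fun x y i =>
    Set.mem_union_right _ (Set.mem_iUnion.mpr ⟨x, Set.mem_iUnion.mpr ⟨y, Set.mem_range_self i⟩⟩)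
  have wfin : wSet.Finite := by
    apply Set.Finite.union
    · exact Set.finite_iUnion fun σ => Set.finite_range _
    · exact Set.finite_iUnion fun x => Set.finite_iUnion fun y => Set.finite_range _
  have pfin : {p : Γ × Γ | p.1 ∈ wSet ∧ p.2 ∈ wSet ∧ lt p.1 p.2}.Finite :=
    (wfin.prod wfin).subset fun p hp => Set.mem_prod.mpr ⟨hp.1, hp.2.1⟩
  set l : List (Γ × Γ) := pfin.toFinset.toList with hldef
  have hlmem : ∀ p : Γ × Γ, p.1 ∈ wSet → p.2 ∈ wSet → lt p.1 p.2 → p ∈ l := fun p h1 h2 h3 =>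
    Finset.mem_toList.mpr (pfin.mem_toFinset.mpr ⟨h1, h2, h3⟩)
  obtain ⟨Y, ltY, hY, prop⟩ := Stmt17Aux.chain hram l (Stmt17Aux.sB L Γ wSet)
    (fun a b => lt a.1 b.1) (Stmt17Aux.sB_age wSet wfin)
  refine ⟨Y, ⟨ltY, hY⟩, ?_⟩
  intro ltX ltY' hltX hltY'
  obtain ⟨β, hβcon⟩ := prop ltY'
  exact Stmt17Aux.keyLemma hlt hΓ horb X hXfin F hF σ₀ M U hU wSet hmemF hmemU l hlmem Y
    ltX ltY' hltX hltY' β.1 hβcon
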